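/- int_Reg(Red-Blue Dominating Set) is decidable: there is an algorithm (a computable function on finite encodings of NFAs) that, given an arbitrary NFA M over the alphabet Σ = {▷, 1, a, #, $}, decides whether there exists a word w ∈ L(M) ∩ Enc such that decode_red-blue(w) = (G, k) where the red-blue graph G has a red-blue dominating set of size at most k. -/

import Mathlib

/-- The fixed five-letter alphabet Σ = {▷, 1, a, #, $}. -/
inductive Letter : Type
  | tri    -- ▷
  | one    -- 1
  | lett   -- a
  | hash   -- #
  | dollar -- $
deriving DecidableEq

/-- Words over the alphabet Σ. -/
abbrev Word := List Letter

/-- The threshold token `▷1^k$`. -/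
def thresholdTok (k : ℕ) : Word := Letter.tri :: (List.replicate k Letter.one ++ [Letter.dollar])

/-- The left vertex token `▷a^p#`. -/
def leftTok (p : ℕ) : Word := Letter.tri :: (List.replicate p Letter.lett ++ [Letter.hash])

/-- The right vertex token `▷a^q$`. -/
def rightTok (q : ℕ) : Word := Letter.tri :: (List.replicate q Letter.lett ++ [Letter.dollar])

/-- The encoding `▷1^k$ ∏_i (▷a^{p_i}# ▷a^{q_i}$)` of a threshold `k` together with a
list of (encoded) edges. -/
def encode (k : ℕ) (es : List (ℕ × ℕ)) : Word :=
  thresholdTok k ++ (es.map (fun e => leftTok e.1 ++ rightTok e.2)).flatten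

/-- The regular language `Enc = ▷1*$(▷a*#▷a*$)*` of all encodings. -/
def Enc : Set Word := { w | ∃ (k : ℕ) (es : List (ℕ × ℕ)), w = encode k es }

/-- A token: a threshold token, a left vertex token, or a right vertex token. -/
def IsToken (w : Word) : Prop :=
  (∃ k, w = thresholdTok k) ∨ (∃ p, w = leftTok p) ∨ (∃ q, w = rightTok q)

/-- A representative function is token-preserving if all representatives are tokens. -/
def TokenPreserving {Q : Type} (rep : Q → Q → Set Word) : Prop :=
  ∀ p q : Q, ∀ w ∈ rep p q, IsToken w

def letterEquiv : Letter ≃ Fin 5 where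
  toFun s :=
    match s with
    | Letter.tri => 0
    | Letter.one => 1
    | Letter.lett => 2
    | Letter.hash => 3
    | Letter.dollar => 4
  invFun n :=
    if n = 0 then Letter.tri
    else if n = 1 then Letter.one
    else if n = 2 then Letter.lett
    else if n = 3 then Letter.hash
    else Letter.dollar
  left_inv s := by cases s <;> rfl
  right_inv n := by fin_cases n <;> rfl

instance : Primcodable Letter := Primcodable.ofEquiv (Fin 5) letterEquiv

/-- A finite encoding of an NFA over `Letter` with states named by natural numbers:
a list of transition triples, an initial state, and a list of final states. -/
abbrev NFAEnc : Type := List (ℕ × Letter × ℕ) × ℕ × List ℕ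

/-- One transition step of an encoded NFA on a set of states. -/
def encStep (T : List (ℕ × Letter × ℕ)) (S : Set ℕ) (x : Letter) : Set ℕ :=
  { q' | ∃ q ∈ S, (q, x, q') ∈ T }

/-- The language accepted by an encoded NFA. -/
def encLang (M : NFAEnc) : Set Word :=
  { w | ∃ qf ∈ M.2.2, qf ∈ w.foldl (encStep M.1) {M.2.1} }

/-- A red-blue graph: fixed color classes of red and blue vertices (each named by
natural numbers) and edges, each joining a red vertex (first component) and a blue
vertex (second component). -/
structure RBGraph where
  R : Finset ℕ
  B : Finset ℕ
  E : Finset (ℕ × ℕ)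

/-- `G` has a red-blue dominating set of size at most `k`: a set of at most `k` red
vertices such that every blue vertex has a neighbor in it. -/
def HasRBDS (G : RBGraph) (k : ℕ) : Prop :=
  ∃ S : Finset ℕ, S ⊆ G.R ∧ S.card ≤ k ∧ ∀ b ∈ G.B, ∃ r ∈ S, (r, b) ∈ G.E

/-- Merging the red vertices `v, v'` into the new red vertex `x`. -/
def redMerge (G : RBGraph) (v v' x : ℕ) : RBGraph where
  R := insert x ((G.R.erase v).erase v')
  B := G.B
  E := G.E.image (fun e => (if e.1 = v ∨ e.1 = v' then x else e.1, e.2))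

/-- Merging the blue vertices `v, v'` into the new blue vertex `x`. -/
def blueMerge (G : RBGraph) (v v' x : ℕ) : RBGraph where
  R := G.R
  B := insert x ((G.B.erase v).erase v')
  E := G.E.image (fun e => (e.1, if e.2 = v ∨ e.2 = v' then x else e.2))

/-- A single color-preserving merge operation on two vertices of the same color
(the new vertex is fresh). -/
def RBMergeStep (G G' : RBGraph) : Prop :=
  (∃ v v' x : ℕ, v ∈ G.R ∧ v' ∈ G.R ∧ x ∉ (G.R.erase v).erase v' ∧
      G' = redMerge G v v' x) ∨
  (∃ v v' x : ℕ, v ∈ G.B ∧ v' ∈ G.B ∧ x ∉ (G.B.erase v).erase v' ∧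
      G' = blueMerge G v v' x)

/-- The red-blue graph described by a list of (encoded) edges: the red vertices are the
first components, the blue vertices the second components. -/
def rbOf (es : List (ℕ × ℕ)) : RBGraph where
  R := (es.map Prod.fst).toFinset
  B := (es.map Prod.snd).toFinset
  E := es.toFinset

/-- `decode_red-blue(w) = (G, k)`. -/
def decodesToRB (w : Word) (G : RBGraph) (k : ℕ) : Prop :=
  ∃ es : List (ℕ × ℕ), w = encode k es ∧ G = rbOf es


namespace S18

/-- Run relation of the encoded NFA. -/
def Runs (T : List (ℕ × Letter × ℕ)) : Word → ℕ → ℕ → Prop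
  | [], q, q' => q = q'
  | x :: w, q, q' => ∃ r, (q, x, r) ∈ T ∧ Runs T w r q'

theorem runs_nil {T q q'} : Runs T [] q q' ↔ q = q' := Iff.rfl

theorem runs_cons {T x w q q'} :
    Runs T (x :: w) q q' ↔ ∃ r, (q, x, r) ∈ T ∧ Runs T w r q' := Iff.rfl

theorem runs_append {T} : ∀ {u v : Word} {q q' : ℕ},
    Runs T (u ++ v) q q' ↔ ∃ r, Runs T u q r ∧ Runs T v r q' := by
  intro u
  induction u with
  | nil => intro v q q'; simp [runs_nil]
  | cons x u ih =>
    intro v q q'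
    simp only [List.cons_append, runs_cons, ih]
    constructor
    · rintro ⟨r, hr, s, h1, h2⟩; exact ⟨s, ⟨r, hr, h1⟩, h2⟩
    · rintro ⟨s, ⟨r, hr, h1⟩, h2⟩; exact ⟨r, hr, s, h1, h2⟩

theorem runs_single {T x q q'} : Runs T [x] q q' ↔ (q, x, q') ∈ T := by
  simp [runs_cons, runs_nil]

/-- target states -/
def Tgt (T : List (ℕ × Letter × ℕ)) : Finset ℕ := (T.map (fun t => t.2.2)).toFinset

theorem runs_end_mem {T w q q'} (h : Runs T w q q') (hw : w ≠ []) : q' ∈ Tgt T := by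
  induction w generalizing q with
  | nil => exact absurd rfl hw
  | cons x w ih =>
    obtain ⟨r, hr, h2⟩ := h
    rcases w with - | ⟨y, w⟩
    · cases h2
      simp only [Tgt, List.mem_toFinset, List.mem_map]
      exact ⟨(q, x, q'), hr, rfl⟩
    · exact ih h2 (by simp)

theorem runs_replicate_of_seq {T a} : ∀ {x : ℕ} {s : ℕ → ℕ},
    (∀ i < x, (s i, a, s (i + 1)) ∈ T) → Runs T (List.replicate x a) (s 0) (s x)
  | 0, s, _ => rfl
  | (x+1), s, h => by
    rw [List.replicate_succ, runs_cons]
    refine ⟨s 1, h 0 (Nat.succ_pos _), ?_⟩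
    have := runs_replicate_of_seq (T := T) (a := a) (x := x) (s := fun i => s (i + 1))
      (fun i hi => h (i+1) (by omega))
    exact this

theorem runs_replicate_seq {T a} : ∀ {x : ℕ} {q q' : ℕ}, Runs T (List.replicate x a) q q' →
    ∃ s : ℕ → ℕ, s 0 = q ∧ s x = q' ∧ ∀ i < x, (s i, a, s (i + 1)) ∈ T := by
  intro x
  induction x with
  | zero =>
    intro q q' h
    exact ⟨fun _ => q, rfl, h.symm ▸ rfl, by omega⟩
  | succ x ih =>
    intro q q' h
    rw [List.replicate_succ, runs_cons] at h
    obtain ⟨r, hr, h2⟩ := h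
    obtain ⟨s, hs0, hsx, hstep⟩ := ih h2
    refine ⟨fun i => if i = 0 then q else s (i - 1), rfl, by simp [hsx], ?_⟩
    intro i hi
    rcases Nat.eq_zero_or_pos i with rfl | hpos
    · simpa [hs0] using hr
    · have h1 : ¬ (i = 0) := by omega
      have h2' : ¬ (i + 1 = 0) := by omega
      simp only [h1, h2', if_false]
      have : i - 1 + 1 = i + 1 - 1 := by omega
      rw [show i + 1 - 1 = i by omega]
      have := hstep (i - 1) (by omega)
      rwa [show i - 1 + 1 = i by omega] at this

theorem runs_replicate_trans {T a u v q r q'} (h1 : Runs T (List.replicate u a) q r)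
    (h2 : Runs T (List.replicate v a) r q') : Runs T (List.replicate (u + v) a) q q' := by
  rw [List.replicate_add, runs_append]; exact ⟨r, h1, h2⟩

end S18

namespace S18

/-- Extract a subrun of a replicate-run from a transition sequence. -/
theorem runs_of_seq_range {T a} {s : ℕ → ℕ} {x : ℕ} (h : ∀ i < x, (s i, a, s (i + 1)) ∈ T)
    {u v : ℕ} (huv : u ≤ v) (hv : v ≤ x) : Runs T (List.replicate (v - u) a) (s u) (s v) := by
  have := runs_replicate_of_seq (T := T) (a := a) (x := v - u) (s := fun i => s (u + i))
    (fun i hi => by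
      have := h (u + i) (by omega)
      rwa [show u + i + 1 = u + (i + 1) by omega] at this)
  simpa [show u + (v - u) = v by omega] using this

/-- Peeling lemma: a long replicate run contains an early loop. -/
theorem peel {T : List (ℕ × Letter × ℕ)} {a : Letter} {x q q' : ℕ}
    (h : Runs T (List.replicate x a) q q') (hx : (Tgt T).card + 1 ≤ x) :
    ∃ q₁ i c y, i + c + y = x ∧ 1 ≤ c ∧ i + c ≤ (Tgt T).card + 1 ∧
      Runs T (List.replicate i a) q q₁ ∧ Runs T (List.replicate c a) q₁ q₁ ∧
      Runs T (List.replicate y a) q₁ q' := by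
  obtain ⟨s, hs0, hsx, hstep⟩ := runs_replicate_seq h
  set d := (Tgt T).card with hd
  -- the states s 1, ..., s (d+1) all lie in Tgt T
  have hmem : ∀ i, 1 ≤ i → i ≤ x → s i ∈ Tgt T := by
    intro i h1 h2
    have : Runs T (List.replicate (i - 0) a) (s 0) (s i) := runs_of_seq_range hstep (by omega) h2
    exact runs_end_mem this (by simp; omega)
  -- pigeonhole on i ↦ s i for i ∈ [1, d+1]
  have hcard : (Tgt T).card < (Finset.Icc 1 (d + 1)).card := by
    rw [Nat.card_Icc]; omega
  obtain ⟨i, hi, j, hj, hne, heq⟩ :=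
    Finset.exists_ne_map_eq_of_card_lt_of_maps_to hcard (f := s)
      (fun i hi => by
        simp only [Finset.mem_coe, Finset.mem_Icc] at hi
        exact hmem i hi.1 (by omega))
  simp only [Finset.mem_Icc] at hi hj
  -- wlog i < j
  rcases Nat.lt_or_ge i j with hij | hij
  case _ =>
    refine ⟨s i, i, j - i, x - j, by omega, by omega, by omega, ?_, ?_, ?_⟩
    · have := runs_of_seq_range hstep (Nat.zero_le i) (by omega)
      simpa [hs0] using this
    · have := runs_of_seq_range hstep (le_of_lt hij) (by omega)
      rwa [← heq] at this
    · have := runs_of_seq_range hstep (show j ≤ x by omega) (le_refl x)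
      rw [← heq] at this
      rwa [hsx] at this
  case _ =>
    have hij' : j < i := by omega
    refine ⟨s j, j, i - j, x - i, by omega, by omega, by omega, ?_, ?_, ?_⟩
    · have := runs_of_seq_range hstep (Nat.zero_le j) (by omega)
      simpa [hs0] using this
    · have := runs_of_seq_range hstep (le_of_lt hij') (by omega)
      rwa [heq] at this
    · have := runs_of_seq_range hstep (show i ≤ x by omega) (le_refl x)
      rw [heq] at this
      rwa [hsx] at this

/-- Iterated peeling: a very long replicate run contains `N` removable loops. -/
theorem loops {T : List (ℕ × Letter × ℕ)} {a : Letter} :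
    ∀ (N : ℕ) {x q q' : ℕ}, Runs T (List.replicate x a) q q' →
      ((Tgt T).card + 1) * N ≤ x →
      ∃ L : List ℕ, L.length = N ∧ (∀ c ∈ L, 1 ≤ c ∧ c ≤ (Tgt T).card + 1) ∧
        ∀ L' : List ℕ, L'.Sublist L → L'.sum ≤ x ∧ Runs T (List.replicate (x - L'.sum) a) q q' := by
  intro N
  set n := (Tgt T).card + 1 with hn
  induction N with
  | zero =>
    intro x q q' h _
    refine ⟨[], rfl, by simp, ?_⟩
    intro (L' : List ℕ) hL'
    have : L' = [] := List.sublist_nil.mp hL'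
    subst this
    simpa using h
  | succ N ih =>
    intro x q q' h hx
    obtain ⟨q₁, i, c, y, hsum, hc1, hicn, hr1, hr2, hr3⟩ := peel h (by nlinarith)
    have hy : n * N ≤ y := by nlinarith
    obtain ⟨L, hlen, hbd, hprop⟩ := ih hr3 hy
    refine ⟨c :: L, by simp [hlen], ?_, ?_⟩
    · intro c' hc'
      rcases List.mem_cons.mp hc' with rfl | hmem
      · exact ⟨hc1, by omega⟩
      · exact hbd c' hmem
    · intro (L' : List ℕ) hL'
      rcases List.sublist_cons_iff.mp hL' with hsub | ⟨r, rfl, hsub⟩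
      · obtain ⟨hle, hrun⟩ := hprop L' hsub
        constructor
        · omega
        · have : Runs T (List.replicate (i + (c + (y - L'.sum))) a) q q' :=
            runs_replicate_trans hr1 (runs_replicate_trans hr2 hrun)
          rwa [show i + (c + (y - L'.sum)) = x - L'.sum by omega] at this
      · obtain ⟨hle, hrun⟩ := hprop r hsub
        constructor
        · simp only [List.sum_cons]; omega
        · have : Runs T (List.replicate (i + (y - r.sum)) a) q q' :=
            runs_replicate_trans hr1 hrun
          rwa [show i + (y - r.sum) = x - (c :: r).sum by simp; omega] at this

end S18

namespace S18

/-- From a long replicate run one can remove exactly `(n+1)!`-many letters,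
where `n` is the number of target states. -/
theorem sub_factorial {T : List (ℕ × Letter × ℕ)} {a : Letter} {x q q' : ℕ}
    (h : Runs T (List.replicate x a) q q')
    (hx : ((Tgt T).card + 1) * (((Tgt T).card + 1) * (Nat.factorial ((Tgt T).card + 1))) ≤ x) :
    Nat.factorial ((Tgt T).card + 1) ≤ x ∧
      Runs T (List.replicate (x - Nat.factorial ((Tgt T).card + 1)) a) q q' := by
  set n := (Tgt T).card + 1 with hn
  set Λ := Nat.factorial n with hΛ
  obtain ⟨L, hlen, hbd, hprop⟩ := loops (n * Λ) h hx
  -- pigeonhole: some value c has count ≥ Λ in L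
  have hΛpos : 1 ≤ Λ := Nat.one_le_iff_ne_zero.mpr (Nat.factorial_ne_zero n)
  have : ∃ c ∈ L, Λ ≤ L.count c := by
    by_contra hcon
    push_neg at hcon
    have hsum : ∑ c ∈ L.toFinset, L.count c = L.length := by
      have := Multiset.toFinset_sum_count_eq (L : Multiset ℕ)
      simpa using this
    have hcard : L.toFinset.card ≤ n := by
      have hsub : L.toFinset ⊆ Finset.Icc 1 n := by
        intro c hc
        rw [List.mem_toFinset] at hc
        obtain ⟨h1, h2⟩ := hbd c hc
        simp [Finset.mem_Icc]; omega
      calc L.toFinset.card ≤ (Finset.Icc 1 n).card := Finset.card_le_card hsub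
        _ = n := by rw [Nat.card_Icc]; omega
    have hlt : L.length < n * Λ := by
      calc L.length = ∑ c ∈ L.toFinset, L.count c := hsum.symm
        _ ≤ ∑ _c ∈ L.toFinset, (Λ - 1) := by
            apply Finset.sum_le_sum
            intro c hc
            have := hcon c (List.mem_toFinset.mp hc)
            omega
        _ = L.toFinset.card * (Λ - 1) := by rw [Finset.sum_const, smul_eq_mul]
        _ ≤ n * (Λ - 1) := Nat.mul_le_mul_right _ hcard
        _ < n * Λ := mul_lt_mul_of_pos_left (by omega) (by omega)
    omega
  obtain ⟨c, hcL, hcount⟩ := this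
  obtain ⟨hc1, hcn⟩ := hbd c hcL
  have hdvd : c ∣ Λ := Nat.dvd_factorial hc1 hcn
  set t := Λ / c with ht
  have htc : t * c = Λ := Nat.div_mul_cancel hdvd
  have hsubl : (List.replicate t c).Sublist L := by
    rw [List.replicate_sublist_iff]
    calc t ≤ t * c := Nat.le_mul_of_pos_right t hc1
      _ = Λ := htc
      _ ≤ L.count c := hcount
  obtain ⟨hle, hrun⟩ := hprop _ hsubl
  rw [List.sum_replicate, smul_eq_mul, htc] at hle hrun
  exact ⟨hle, hrun⟩

/-- The uniform reduction function: repeatedly subtract `Λ` while `≥ B`. -/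
def redAux (B Λ : ℕ) : ℕ → ℕ → ℕ
  | 0, x => x
  | f + 1, x => if B ≤ x then redAux B Λ f (x - Λ) else x

def reduce (B Λ x : ℕ) : ℕ := redAux B Λ x x

theorem redAux_le {B Λ : ℕ} : ∀ f x, redAux B Λ f x ≤ x
  | 0, _ => le_refl _
  | f + 1, x => by
    rw [redAux]
    split
    · exact le_trans (redAux_le f (x - Λ)) (Nat.sub_le _ _)
    · exact le_refl _

theorem reduce_le (B Λ x : ℕ) : reduce B Λ x ≤ x := redAux_le _ _

theorem redAux_lt {B Λ : ℕ} (hΛ : 1 ≤ Λ) (hB : 1 ≤ B) :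
    ∀ f x, x ≤ f → redAux B Λ f x < B
  | 0, x, hx => by
    interval_cases x
    simp [redAux]; omega
  | f + 1, x, hx => by
    rw [redAux]
    split
    · exact redAux_lt hΛ hB f (x - Λ) (by omega)
    · omega

theorem reduce_lt {B Λ : ℕ} (hΛ : 1 ≤ Λ) (hB : 1 ≤ B) (x : ℕ) : reduce B Λ x < B :=
  redAux_lt hΛ hB x x (le_refl x)

theorem redAux_ge {B Λ : ℕ} : ∀ f x, min x (B - Λ) ≤ redAux B Λ f x
  | 0, x => by simp only [redAux]; exact min_le_left _ _
  | f + 1, x => by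
    rw [redAux]
    split
    · have := redAux_ge (B := B) (Λ := Λ) f (x - Λ)
      omega
    · omega

theorem reduce_ge {B Λ : ℕ} (x : ℕ) : min x (B - Λ) ≤ reduce B Λ x := redAux_ge _ _

theorem reduce_eq_self {B Λ x : ℕ} (h : x < B) : reduce B Λ x = x := by
  unfold reduce
  cases x with
  | zero => rfl
  | succ f => rw [redAux, if_neg (by omega)]

/-- Reduction preserves replicate runs, provided `B` is large enough. -/
theorem reduce_runs {T : List (ℕ × Letter × ℕ)} {a : Letter} {B Λ : ℕ}
    (hΛ : Λ = Nat.factorial ((Tgt T).card + 1))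
    (hB : ((Tgt T).card + 1) * (((Tgt T).card + 1) * Λ) + Λ ≤ B) :
    ∀ {x q q' : ℕ}, Runs T (List.replicate x a) q q' →
      Runs T (List.replicate (reduce B Λ x) a) q q' := by
  have main : ∀ f x q q', x ≤ f → Runs T (List.replicate x a) q q' →
      Runs T (List.replicate (redAux B Λ f x) a) q q' := by
    intro f
    induction f with
    | zero => intro x q q' hx h; simpa [redAux] using h
    | succ f ih =>
      intro x q q' hx h
      rw [redAux]
      split
      case isTrue hc =>
        have hx' : ((Tgt T).card + 1) * (((Tgt T).card + 1) * Nat.factorial ((Tgt T).card + 1)) ≤ x := by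
          rw [← hΛ]; omega
        obtain ⟨hle, hrun⟩ := sub_factorial h hx'
        rw [← hΛ] at hle hrun
        have hΛ1 : 1 ≤ Λ := hΛ ▸ Nat.one_le_iff_ne_zero.mpr (Nat.factorial_ne_zero _)
        exact ih (x - Λ) q q' (by omega) hrun
      case isFalse => exact h
  intro x q q' h
  exact main x x q q' (le_refl x) h

end S18


namespace S18

def block (e : ℕ × ℕ) : Word := leftTok e.1 ++ rightTok e.2

def flat (es : List (ℕ × ℕ)) : Word := (es.map block).flatten

theorem encode_eq (k : ℕ) (es : List (ℕ × ℕ)) : encode k es = thresholdTok k ++ flat es := rfl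

theorem flat_cons (e : ℕ × ℕ) (es : List (ℕ × ℕ)) : flat (e :: es) = block e ++ flat es := by
  simp [flat]

theorem flat_append (es₁ es₂ : List (ℕ × ℕ)) :
    flat (es₁ ++ es₂) = flat es₁ ++ flat es₂ := by
  simp [flat]

theorem mem_foldl_iff {T : List (ℕ × Letter × ℕ)} :
    ∀ (w : Word) (S : Set ℕ) (q' : ℕ),
      q' ∈ w.foldl (encStep T) S ↔ ∃ q ∈ S, Runs T w q q' := by
  intro w
  induction w with
  | nil => intro S q'; simp [runs_nil]
  | cons x w ih =>
    intro S q'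
    rw [List.foldl_cons, ih]
    constructor
    · rintro ⟨q, ⟨r, hr, hT⟩, hrun⟩
      exact ⟨r, hr, q, hT, hrun⟩
    · rintro ⟨r, hr, q, hT, hrun⟩
      exact ⟨q, ⟨r, hr, hT⟩, hrun⟩

theorem mem_encLang_iff {M : NFAEnc} {w : Word} :
    w ∈ encLang M ↔ ∃ qf ∈ M.2.2, Runs M.1 w M.2.1 qf := by
  unfold encLang
  constructor
  · rintro ⟨qf, hqf, hmem⟩
    rw [mem_foldl_iff] at hmem
    obtain ⟨q, hq, hrun⟩ := hmem
    rcases hq with rfl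
    exact ⟨qf, hqf, hrun⟩
  · rintro ⟨qf, hqf, hrun⟩
    exact ⟨qf, hqf, (mem_foldl_iff w {M.2.1} qf).mpr ⟨M.2.1, rfl, hrun⟩⟩

theorem runs_leftTok {T p q q'} :
    Runs T (leftTok p) q q' ↔
      ∃ r r', (q, Letter.tri, r) ∈ T ∧ Runs T (List.replicate p Letter.lett) r r' ∧
        (r', Letter.hash, q') ∈ T := by
  show Runs T (Letter.tri :: (List.replicate p Letter.lett ++ [Letter.hash])) q q' ↔ _
  rw [runs_cons]
  constructor
  · rintro ⟨r, hT, hrest⟩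
    rw [runs_append] at hrest
    obtain ⟨r', h1, h2⟩ := hrest
    rw [runs_single] at h2
    exact ⟨r, r', hT, h1, h2⟩
  · rintro ⟨r, r', hT, h1, h2⟩
    exact ⟨r, hT, runs_append.mpr ⟨r', h1, runs_single.mpr h2⟩⟩

theorem runs_rightTok {T p q q'} :
    Runs T (rightTok p) q q' ↔
      ∃ r r', (q, Letter.tri, r) ∈ T ∧ Runs T (List.replicate p Letter.lett) r r' ∧
        (r', Letter.dollar, q') ∈ T := by
  show Runs T (Letter.tri :: (List.replicate p Letter.lett ++ [Letter.dollar])) q q' ↔ _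
  rw [runs_cons]
  constructor
  · rintro ⟨r, hT, hrest⟩
    rw [runs_append] at hrest
    obtain ⟨r', h1, h2⟩ := hrest
    rw [runs_single] at h2
    exact ⟨r, r', hT, h1, h2⟩
  · rintro ⟨r, r', hT, h1, h2⟩
    exact ⟨r, hT, runs_append.mpr ⟨r', h1, runs_single.mpr h2⟩⟩

theorem runs_thresholdTok {T k q q'} :
    Runs T (thresholdTok k) q q' ↔
      ∃ r r', (q, Letter.tri, r) ∈ T ∧ Runs T (List.replicate k Letter.one) r r' ∧
        (r', Letter.dollar, q') ∈ T := by
  show Runs T (Letter.tri :: (List.replicate k Letter.one ++ [Letter.dollar])) q q' ↔ _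
  rw [runs_cons]
  constructor
  · rintro ⟨r, hT, hrest⟩
    rw [runs_append] at hrest
    obtain ⟨r', h1, h2⟩ := hrest
    rw [runs_single] at h2
    exact ⟨r, r', hT, h1, h2⟩
  · rintro ⟨r, r', hT, h1, h2⟩
    exact ⟨r, hT, runs_append.mpr ⟨r', h1, runs_single.mpr h2⟩⟩

/-! Global constants -/

def nn (T : List (ℕ × Letter × ℕ)) : ℕ := (Tgt T).card + 1
def lam (T : List (ℕ × Letter × ℕ)) : ℕ := Nat.factorial (nn T)
def b0 (T : List (ℕ × Letter × ℕ)) : ℕ := nn T * (nn T * lam T) + lam T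
def b1 (T : List (ℕ × Letter × ℕ)) : ℕ := b0 T + lam T
def fRed (T : List (ℕ × Letter × ℕ)) (x : ℕ) : ℕ := reduce (b0 T) (lam T) x
def fThr (T : List (ℕ × Letter × ℕ)) (x : ℕ) : ℕ := reduce (b1 T) (lam T) x

theorem lam_pos (T : List (ℕ × Letter × ℕ)) : 1 ≤ lam T :=
  Nat.one_le_iff_ne_zero.mpr (Nat.factorial_ne_zero _)

theorem fRed_lt (T : List (ℕ × Letter × ℕ)) (x : ℕ) : fRed T x < b0 T :=
  reduce_lt (lam_pos T) (by have := lam_pos T; unfold b0; omega) x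

theorem fThr_lt (T : List (ℕ × Letter × ℕ)) (x : ℕ) : fThr T x < b1 T :=
  reduce_lt (lam_pos T) (by have := lam_pos T; unfold b1 b0; omega) x

theorem fRed_runs {T : List (ℕ × Letter × ℕ)} {a : Letter} {x q q' : ℕ}
    (h : Runs T (List.replicate x a) q q') : Runs T (List.replicate (fRed T x) a) q q' :=
  reduce_runs rfl (le_refl _) h

theorem fThr_runs {T : List (ℕ × Letter × ℕ)} {a : Letter} {x q q' : ℕ}
    (h : Runs T (List.replicate x a) q q') : Runs T (List.replicate (fThr T x) a) q q' :=
  reduce_runs rfl (by unfold b1 b0 lam nn; omega) h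

theorem fThr_cases (T : List (ℕ × Letter × ℕ)) (x : ℕ) :
    fThr T x = x ∨ b0 T ≤ fThr T x := by
  rcases Nat.lt_or_ge x (b1 T) with h | h
  · exact Or.inl (reduce_eq_self h)
  · right
    have h2 := reduce_ge (B := b1 T) (Λ := lam T) x
    have h3 : b1 T - lam T = b0 T := by unfold b1; omega
    rw [h3] at h2
    have h4 : b0 T ≤ x := by have := lam_pos T; unfold b1 at h; omega
    unfold fThr
    omega

/-- The transformation of an edge. -/
def redEdge (T : List (ℕ × Letter × ℕ)) (e : ℕ × ℕ) : ℕ × ℕ := (fRed T e.1, fRed T e.2)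

theorem transform_flat {T : List (ℕ × Letter × ℕ)} :
    ∀ {es : List (ℕ × ℕ)} {q q' : ℕ}, Runs T (flat es) q q' →
      Runs T (flat (es.map (redEdge T))) q q' := by
  intro es
  induction es with
  | nil => intro q q' h; exact h
  | cons e es ih =>
    intro q q' h
    rw [flat_cons, runs_append] at h
    obtain ⟨r, h1, h2⟩ := h
    rw [List.map_cons, flat_cons, runs_append]
    refine ⟨r, ?_, ih h2⟩
    unfold block at h1 ⊢
    rw [runs_append] at h1
    obtain ⟨s, hl, hr⟩ := h1
    rw [runs_leftTok] at hl
    rw [runs_rightTok] at hr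
    obtain ⟨u, u', hu, hul, hu'⟩ := hl
    obtain ⟨v, v', hv, hvl, hv'⟩ := hr
    rw [runs_append]
    exact ⟨s, runs_leftTok.mpr ⟨u, u', hu, fRed_runs hul, hu'⟩,
      runs_rightTok.mpr ⟨v, v', hv, fRed_runs hvl, hv'⟩⟩

theorem transform_encode {T : List (ℕ × Letter × ℕ)} {k : ℕ} {es : List (ℕ × ℕ)} {q q' : ℕ}
    (h : Runs T (encode k es) q q') :
    Runs T (encode (fThr T k) (es.map (redEdge T))) q q' := by
  rw [encode_eq, runs_append] at h ⊢
  obtain ⟨r, h1, h2⟩ := h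
  refine ⟨r, ?_, transform_flat h2⟩
  rw [runs_thresholdTok] at h1 ⊢
  obtain ⟨u, u', hu, hul, hu'⟩ := h1
  exact ⟨u, u', hu, fThr_runs hul, hu'⟩

end S18


namespace S18

theorem rbOf_congr {es₁ es₂ : List (ℕ × ℕ)} (h : es₁.toFinset = es₂.toFinset) :
    rbOf es₁ = rbOf es₂ := by
  have hmem : ∀ e : ℕ × ℕ, e ∈ es₁ ↔ e ∈ es₂ := by
    intro e; rw [← List.mem_toFinset, h, List.mem_toFinset]
  unfold rbOf
  congr 1
  · ext r; simp only [List.mem_toFinset, List.mem_map, hmem]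
  · ext b; simp only [List.mem_toFinset, List.mem_map, hmem]

theorem hasRBDS_map {es : List (ℕ × ℕ)} {k : ℕ} (f g : ℕ → ℕ)
    (h : HasRBDS (rbOf es) k) :
    HasRBDS (rbOf (es.map (fun e => (f e.1, g e.2)))) k := by
  obtain ⟨S, hsub, hcard, hdom⟩ := h
  refine ⟨S.image f, ?_, le_trans Finset.card_image_le hcard, ?_⟩
  · intro r hr
    rw [Finset.mem_image] at hr
    obtain ⟨r₀, hr₀, rfl⟩ := hr
    have hmem := hsub hr₀
    simp only [rbOf, List.mem_toFinset, List.mem_map] at hmem ⊢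
    obtain ⟨e, he, hfst⟩ := hmem
    exact ⟨(f e.1, g e.2), ⟨e, he, rfl⟩, by rw [hfst]⟩
  · intro b hb
    simp only [rbOf, List.mem_toFinset, List.mem_map] at hb
    obtain ⟨e', ⟨e, he, rfl⟩, hsnd⟩ := hb
    obtain ⟨r, hrS, hedge⟩ := hdom e.2 (by
      simp only [rbOf, List.mem_toFinset, List.mem_map]
      exact ⟨e, he, rfl⟩)
    simp only [rbOf, List.mem_toFinset] at hedge
    refine ⟨f r, Finset.mem_image_of_mem f hrS, ?_⟩
    simp only [rbOf, List.mem_toFinset, List.mem_map]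
    refine ⟨(r, e.2), hedge, ?_⟩
    simp [← hsnd]

theorem hasRBDS_of_red_lt {es : List (ℕ × ℕ)} {c k : ℕ} (hbd : ∀ e ∈ es, e.1 < c)
    (hck : c ≤ k) : HasRBDS (rbOf es) k := by
  refine ⟨(es.map Prod.fst).toFinset, Finset.Subset.refl _, ?_, ?_⟩
  · calc (es.map Prod.fst).toFinset.card ≤ (Finset.range c).card := by
          apply Finset.card_le_card
          intro r hr
          simp only [List.mem_toFinset, List.mem_map] at hr
          obtain ⟨e, he, rfl⟩ := hr
          simpa using hbd e he
      _ = c := Finset.card_range c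
      _ ≤ k := hck
  · intro b hb
    simp only [rbOf, List.mem_toFinset, List.mem_map] at hb
    obtain ⟨e, he, rfl⟩ := hb
    refine ⟨e.1, ?_, ?_⟩
    · simp only [List.mem_toFinset, List.mem_map]
      exact ⟨e, he, rfl⟩
    · simp only [rbOf, List.mem_toFinset]
      simpa using he

end S18


namespace S18

theorem flat_ne_nil {es : List (ℕ × ℕ)} (h : es ≠ []) : flat es ≠ [] := by
  cases es with
  | nil => exact absurd rfl h
  | cons e es => simp [flat_cons, block, leftTok]

/-- One shortening step: a long edge list contains a removable segment. -/
theorem shrink_step {T : List (ℕ × Letter × ℕ)} {c : ℕ} {es : List (ℕ × ℕ)} {q q' : ℕ}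
    (hbd : ∀ e ∈ es, e.1 < c ∧ e.2 < c)
    (hlen : (Tgt T).card * (c * c + 2) + 1 < es.length)
    (hrun : Runs T (flat es) q q') :
    ∃ es' : List (ℕ × ℕ), es'.toFinset = es.toFinset ∧ es'.length < es.length ∧
      Runs T (flat es') q q' := by
  set m := es.length with hm
  set d := (Tgt T).card with hd
  set E := c * c with hE
  -- boundary states
  have hsplit : ∀ i : ℕ, ∃ r, Runs T (flat (es.take i)) q r ∧ Runs T (flat (es.drop i)) r q' := by
    intro i
    have : flat es = flat (es.take i) ++ flat (es.drop i) := by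
      rw [← flat_append, List.take_append_drop]
    rw [this, runs_append] at hrun
    exact hrun
  set st := fun i => (hsplit i).choose with hst
  have hst1 : ∀ i, Runs T (flat (es.take i)) q (st i) := fun i => (hsplit i).choose_spec.1
  have hst2 : ∀ i, Runs T (flat (es.drop i)) (st i) q' := fun i => (hsplit i).choose_spec.2
  have hmemTgt : ∀ i, 1 ≤ i → i ≤ m - 1 → st i ∈ Tgt T := by
    intro i h1 h2
    apply runs_end_mem (hst1 i)
    apply flat_ne_nil
    rw [Ne, List.take_eq_nil_iff]
    push_neg
    constructor
    · omega
    · intro hnil; rw [hnil] at hm; simp at hm; omega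
  -- pigeonhole: some boundary state occurs at least E + 2 times
  have hpig : ∃ y ∈ Tgt T, E + 1 < ((Finset.Icc 1 (m-1)).filter (fun x => st x = y)).card := by
    apply Finset.exists_lt_card_fiber_of_mul_lt_card_of_maps_to
    · intro i hi
      rw [Finset.mem_Icc] at hi
      exact hmemTgt i hi.1 hi.2
    · rw [Nat.card_Icc, ← hd]
      have hmul : d * (E + 1) ≤ d * (E + 2) := Nat.mul_le_mul_left _ (by omega)
      omega
  obtain ⟨y, _, hycard⟩ := hpig
  obtain ⟨F, hFsub, hFcard⟩ :=
    Finset.exists_subset_card_eq (by omega :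
      E + 2 ≤ ((Finset.Icc 1 (m-1)).filter (fun x => st x = y)).card)
  have hFmem : ∀ i ∈ F, (1 ≤ i ∧ i ≤ m - 1) ∧ st i = y := by
    intro i hi
    have := hFsub hi
    rw [Finset.mem_filter, Finset.mem_Icc] at this
    exact this
  set emb := F.orderEmbOfFin hFcard with hemb
  have hembF : ∀ i, emb i ∈ F := fun i => F.orderEmbOfFin_mem hFcard i
  -- segment data
  set a := fun j : Fin (E + 1) => emb (Fin.castSucc j) with ha
  set b := fun j : Fin (E + 1) => emb (Fin.succ j) with hb
  have hab : ∀ j, a j < b j := by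
    intro j
    exact emb.lt_iff_lt.mpr (Fin.castSucc_lt_succ (i := j))
  have haF : ∀ j, (1 ≤ a j ∧ a j ≤ m - 1) ∧ st (a j) = y := fun j => hFmem _ (hembF _)
  have hbF : ∀ j, (1 ≤ b j ∧ b j ≤ m - 1) ∧ st (b j) = y := fun j => hFmem _ (hembF _)
  set Mid := fun j : Fin (E + 1) => (es.drop (a j)).take (b j - a j) with hMid
  set Cj := fun j : Fin (E + 1) => es.take (a j) ++ es.drop (b j) with hCj
  have htake : ∀ j, es.take (b j) = es.take (a j) ++ Mid j := by
    intro j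
    rw [hMid]
    rw [← List.take_add]
    have := hab j
    congr 1
    omega
  have hMidTake : ∀ j, ∀ x ∈ Mid j, x ∈ es.take (b j) := by
    intro j x hx
    rw [htake j, List.mem_append]
    exact Or.inr hx
  have hMidEs : ∀ j, ∀ x ∈ Mid j, x ∈ es := by
    intro j x hx
    exact List.take_subset _ _ (hMidTake j x hx)
  have hmono : ∀ j j' : Fin (E+1), j < j' → ∀ x ∈ Mid j, x ∈ Cj j' := by
    intro j j' hjj' x hx
    have hble : b j ≤ a j' := by
      apply emb.le_iff_le.mpr
      rw [Fin.le_def]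
      simp only [Fin.val_succ, Fin.coe_castSucc]
      exact Fin.lt_iff_val_lt_val.mp hjj'
    have hx2 : x ∈ es.take (a j') := by
      have h1 : es.take (b j) = (es.take (a j')).take (b j) := by
        rw [List.take_take]
        congr 1
        omega
      have := hMidTake j x hx
      rw [h1] at this
      exact List.take_subset _ _ this
    rw [hCj, List.mem_append]
    exact Or.inl hx2
  by_cases hcase : ∃ j : Fin (E+1), ∀ x ∈ Mid j, x ∈ Cj j
  · obtain ⟨j, hj⟩ := hcase
    refine ⟨Cj j, ?_, ?_, ?_⟩
    · have hdecomp : es = es.take (a j) ++ Mid j ++ es.drop (b j) := by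
        rw [← htake j, List.take_append_drop]
      ext e
      simp only [hCj, List.mem_toFinset, List.mem_append]
      constructor
      · rintro (h | h)
        · exact List.take_subset _ _ h
        · exact List.drop_subset _ _ h
      · intro h
        rw [hdecomp, List.mem_append, List.mem_append] at h
        rcases h with (h | h) | h
        · exact Or.inl h
        · have := hj e h
          rw [hCj, List.mem_append] at this
          exact this
        · exact Or.inr h
    · rw [hCj, List.length_append, List.length_take, List.length_drop]
      have h1 := (haF j).1
      have h2 := (hbF j).1
      have h3 := hab j
      omega
    · rw [hCj, flat_append, runs_append]
      refine ⟨y, ?_, ?_⟩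
      · have := hst1 (a j); rwa [(haF j).2] at this
      · have := hst2 (b j); rwa [(hbF j).2] at this
  · push_neg at hcase
    exfalso
    choose h hmem hnot using hcase
    have hinj : Function.Injective h := by
      have key : ∀ j j' : Fin (E+1), j < j' → h j ≠ h j' := by
        intro j j' hlt heq
        apply hnot j'
        rw [← heq]
        exact hmono j j' hlt (h j) (hmem j)
      intro j j' heq
      by_contra hne
      rcases lt_or_gt_of_ne hne with hlt | hgt
      · exact key j j' hlt heq
      · exact key j' j hgt heq.symm
    have hcard1 : (Finset.univ : Finset (Fin (E+1))).card ≤ es.toFinset.card := by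
      apply Finset.card_le_card_of_injOn h
      · intro j _
        rw [Finset.mem_coe, List.mem_toFinset]
        exact hMidEs j (h j) (hmem j)
      · exact Function.Injective.injOn hinj
    have hcard2 : es.toFinset.card ≤ E := by
      calc es.toFinset.card ≤ ((Finset.range c) ×ˢ (Finset.range c)).card := by
            apply Finset.card_le_card
            intro e he
            rw [List.mem_toFinset] at he
            obtain ⟨l, r⟩ := hbd e he
            rw [Finset.mem_product]
            simp [Finset.mem_range]
            omega
        _ = E := by rw [Finset.card_product, Finset.card_range, hE]
    simp only [Finset.card_univ, Fintype.card_fin] at hcard1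
    omega

/-- Shrinking: every accepted bounded edge list can be replaced by a short one with the
same edge set. -/
theorem shrink {T : List (ℕ × Letter × ℕ)} {c : ℕ} :
    ∀ (N : ℕ) (es : List (ℕ × ℕ)) {q q' : ℕ}, es.length ≤ N →
      (∀ e ∈ es, e.1 < c ∧ e.2 < c) → Runs T (flat es) q q' →
      ∃ es' : List (ℕ × ℕ), es'.toFinset = es.toFinset ∧
        es'.length ≤ (Tgt T).card * (c * c + 2) + 1 ∧ Runs T (flat es') q q' := by
  intro N
  induction N with
  | zero =>
    intro es q q' hN hbd hrun
    exact ⟨es, rfl, by omega, hrun⟩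
  | succ N ih =>
    intro es q q' hN hbd hrun
    rcases le_or_gt es.length ((Tgt T).card * (c * c + 2) + 1) with h | h
    · exact ⟨es, rfl, h, hrun⟩
    · obtain ⟨es₂, hfin, hlen, hrun₂⟩ := shrink_step hbd h hrun
      have hbd₂ : ∀ e ∈ es₂, e.1 < c ∧ e.2 < c := by
        intro e he
        apply hbd
        have h2 : e ∈ es₂.toFinset := List.mem_toFinset.mpr he
        rw [hfin] at h2
        exact List.mem_toFinset.mp h2
      obtain ⟨es', h1, h2, h3⟩ := ih es₂ (by omega) hbd₂ hrun₂
      exact ⟨es', h1.trans hfin, h2, h3⟩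

end S18


namespace S18

def mBound (T : List (ℕ × Letter × ℕ)) : ℕ := (Tgt T).card * (b0 T * b0 T + 2) + 1

/-- The bounded characterization of the target predicate. -/
theorem main_iff (M : NFAEnc) :
    (∃ w : Word, w ∈ encLang M ∧ w ∈ Enc ∧
        ∃ (G : RBGraph) (k : ℕ), decodesToRB w G k ∧ HasRBDS G k) ↔
    (∃ k, k < b1 M.1 ∧ ∃ es : List (ℕ × ℕ), es.length ≤ mBound M.1 ∧
        (∀ e ∈ es, e.1 < b0 M.1 ∧ e.2 < b0 M.1) ∧
        encode k es ∈ encLang M ∧ HasRBDS (rbOf es) k) := by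
  constructor
  · rintro ⟨w, hL, -, G, k, ⟨es, rfl, rfl⟩, hRBDS⟩
    set T := M.1 with hT
    obtain ⟨qf, hqf, hrun⟩ := mem_encLang_iff.mp hL
    set k' := fThr T k with hk'
    set es₁ := es.map (redEdge T) with hes₁
    have h1 : Runs T (encode k' es₁) M.2.1 qf := transform_encode hrun
    have hbd₁ : ∀ e ∈ es₁, e.1 < b0 T ∧ e.2 < b0 T := by
      intro e he
      rw [hes₁, List.mem_map] at he
      obtain ⟨e₀, -, rfl⟩ := he
      exact ⟨fRed_lt T e₀.1, fRed_lt T e₀.2⟩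
    have hRBDS₁ : HasRBDS (rbOf es₁) k' := by
      rcases fThr_cases T k with heq | hge
      · rw [hk', heq]
        exact hasRBDS_map (fRed T) (fRed T) hRBDS
      · exact hasRBDS_of_red_lt (fun e he => (hbd₁ e he).1) hge
    rw [encode_eq, runs_append] at h1
    obtain ⟨r, hthr, hflat⟩ := h1
    obtain ⟨es₂, hfin, hlen₂, hrun₂⟩ := shrink es₁.length es₁ (le_refl _) hbd₁ hflat
    refine ⟨k', fThr_lt T k, es₂, hlen₂, ?_, ?_, ?_⟩
    · intro e he
      apply hbd₁
      have h2 : e ∈ es₂.toFinset := List.mem_toFinset.mpr he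
      rw [hfin] at h2
      exact List.mem_toFinset.mp h2
    · exact mem_encLang_iff.mpr ⟨qf, hqf, by
        rw [encode_eq, runs_append]
        exact ⟨r, hthr, hrun₂⟩⟩
    · rw [rbOf_congr hfin]
      exact hRBDS₁
  · rintro ⟨k, -, es, -, -, hL, hRBDS⟩
    exact ⟨encode k es, hL, ⟨k, es, rfl⟩, rbOf es, k, ⟨es, rfl, rfl⟩, hRBDS⟩

end S18


namespace S18

/-! ### Boolean checker -/

def anyB {α : Type} (l : List α) (p : α → Bool) : Bool :=
  l.foldr (fun a acc => p a || acc) false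

theorem anyB_iff {α : Type} {l : List α} {p : α → Bool} :
    anyB l p = true ↔ ∃ x ∈ l, p x = true := by
  induction l with
  | nil => simp [anyB]
  | cons a l ih => simp [anyB, List.foldr_cons] at ih ⊢; rw [ih]

def allB {α : Type} (l : List α) (p : α → Bool) : Bool :=
  l.foldr (fun a acc => p a && acc) true

theorem allB_iff {α : Type} {l : List α} {p : α → Bool} :
    allB l p = true ↔ ∀ x ∈ l, p x = true := by
  induction l with
  | nil => simp [allB]
  | cons a l ih =>
    simp only [allB, List.foldr_cons, Bool.and_eq_true] at ih ⊢
    rw [ih]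
    simp

def memB (x : ℕ) (l : List ℕ) : Bool := anyB l (fun a => decide (a = x))

theorem memB_iff {x : ℕ} {l : List ℕ} : memB x l = true ↔ x ∈ l := by
  unfold memB
  rw [anyB_iff]
  simp

def memP (x : ℕ × ℕ) (l : List (ℕ × ℕ)) : Bool := anyB l (fun a => decide (a = x))

theorem memP_iff {x : ℕ × ℕ} {l : List (ℕ × ℕ)} : memP x l = true ↔ x ∈ l := by
  unfold memP
  rw [anyB_iff]
  simp

/-- One NFA step on a list of states. -/
def stepB (T : List (ℕ × Letter × ℕ)) (S : List ℕ) (x : Letter) : List ℕ :=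
  T.flatMap (fun t => cond (memB t.1 S && decide (t.2.1 = x)) [t.2.2] [])

theorem mem_stepB {T S x q'} :
    q' ∈ stepB T S x ↔ ∃ q ∈ S, (q, x, q') ∈ T := by
  unfold stepB
  rw [List.mem_flatMap]
  constructor
  · rintro ⟨t, ht, hq'⟩
    rcases hcond : (memB t.1 S && decide (t.2.1 = x)) with _ | _
    · rw [hcond] at hq'; simp at hq'
    · rw [hcond] at hq'
      rw [Bool.and_eq_true, memB_iff, decide_eq_true_eq] at hcond
      simp only [cond_true, List.mem_singleton] at hq'
      subst hq'
      exact ⟨t.1, hcond.1, by rw [← hcond.2]; exact ht⟩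
  · rintro ⟨q, hq, hT⟩
    refine ⟨(q, x, q'), hT, ?_⟩
    have hc : (memB q S && decide (x = x)) = true := by
      rw [Bool.and_eq_true, memB_iff, decide_eq_true_eq]
      exact ⟨hq, rfl⟩
    simp [memB_iff.mpr hq]

theorem foldB {T : List (ℕ × Letter × ℕ)} :
    ∀ (w : Word) (S : List ℕ) (Sset : Set ℕ), (∀ q, q ∈ S ↔ q ∈ Sset) →
      ∀ q', q' ∈ w.foldl (stepB T) S ↔ q' ∈ w.foldl (encStep T) Sset := by
  intro w
  induction w with
  | nil => intro S Sset h q'; exact h q'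
  | cons x w ih =>
    intro S Sset h q'
    rw [List.foldl_cons, List.foldl_cons]
    apply ih
    intro q
    rw [mem_stepB]
    unfold encStep
    constructor
    · rintro ⟨r, hr, hT⟩; exact ⟨r, (h r).mp hr, hT⟩
    · rintro ⟨r, hr, hT⟩; exact ⟨r, (h r).mpr hr, hT⟩

def acceptB (M : NFAEnc) (w : Word) : Bool :=
  anyB M.2.2 (fun qf => memB qf (w.foldl (stepB M.1) [M.2.1]))

theorem acceptB_iff {M : NFAEnc} {w : Word} : acceptB M w = true ↔ w ∈ encLang M := by
  unfold acceptB encLang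
  rw [anyB_iff]
  constructor
  · rintro ⟨qf, hqf, hmem⟩
    rw [memB_iff] at hmem
    refine ⟨qf, hqf, ?_⟩
    have := (foldB w [M.2.1] {M.2.1} (by simp) qf).mp hmem
    exact this
  · rintro ⟨qf, hqf, hmem⟩
    refine ⟨qf, hqf, ?_⟩
    rw [memB_iff]
    exact (foldB w [M.2.1] {M.2.1} (by simp) qf).mpr hmem

/-! ### Red-blue dominating set checker -/

def sublB : List ℕ → List (List ℕ)
  | [] => [[]]
  | a :: l => sublB l ++ (sublB l).map (a :: ·)

theorem mem_sublB {l' l : List ℕ} : l' ∈ sublB l ↔ l'.Sublist l := by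
  induction l generalizing l' with
  | nil => simp [sublB, List.sublist_nil]
  | cons a l ih =>
    simp only [sublB, List.mem_append, List.mem_map]
    rw [List.sublist_cons_iff]
    constructor
    · rintro (h | ⟨r, hr, rfl⟩)
      · exact Or.inl (ih.mp h)
      · exact Or.inr ⟨r, rfl, ih.mp hr⟩
    · rintro (h | ⟨r, rfl, hr⟩)
      · exact Or.inl (ih.mpr h)
      · exact Or.inr ⟨r, ih.mpr hr, rfl⟩

theorem exists_sublist_toFinset : ∀ (l : List ℕ) (S : Finset ℕ), S ⊆ l.toFinset →
    ∃ l' : List ℕ, l'.Sublist l ∧ l'.toFinset = S ∧ l'.Nodup := by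
  intro l
  induction l with
  | nil =>
    intro S hS
    refine ⟨[], List.Sublist.refl _, ?_, List.nodup_nil⟩
    simp only [List.toFinset_nil]
    symm
    rw [← Finset.subset_empty]
    simpa using hS
  | cons a l ih =>
    intro S hS
    by_cases ha : a ∈ S
    · obtain ⟨l', hsub, hfin, hnd⟩ := ih (S.erase a) (by
        intro x hx
        rw [Finset.mem_erase] at hx
        have := hS hx.2
        rw [List.toFinset_cons, Finset.mem_insert] at this
        rcases this with rfl | h
        · exact absurd rfl hx.1
        · exact h)
      refine ⟨a :: l', hsub.cons₂ a, ?_, ?_⟩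
      · rw [List.toFinset_cons, hfin, Finset.insert_erase ha]
      · rw [List.nodup_cons]
        refine ⟨?_, hnd⟩
        intro hmem
        have : a ∈ S.erase a := by rw [← hfin]; exact List.mem_toFinset.mpr hmem
        simp at this
    · obtain ⟨l', hsub, hfin, hnd⟩ := ih S (by
        intro x hx
        have := hS hx
        rw [List.toFinset_cons, Finset.mem_insert] at this
        rcases this with rfl | h
        · exact absurd hx ha
        · exact h)
      exact ⟨l', hsub.cons a, hfin, hnd⟩

def rbdsB (k : ℕ) (es : List (ℕ × ℕ)) : Bool :=
  anyB (sublB (es.map Prod.fst)) (fun S =>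
    decide (S.length ≤ k) &&
      allB (es.map Prod.snd) (fun b => anyB S (fun r => memP (r, b) es)))

theorem rbdsB_iff {k : ℕ} {es : List (ℕ × ℕ)} :
    rbdsB k es = true ↔ HasRBDS (rbOf es) k := by
  unfold rbdsB
  rw [anyB_iff]
  constructor
  · rintro ⟨S, hSmem, hS⟩
    rw [Bool.and_eq_true, decide_eq_true_eq, allB_iff] at hS
    obtain ⟨hlen, hcov⟩ := hS
    rw [mem_sublB] at hSmem
    refine ⟨S.toFinset, ?_, ?_, ?_⟩
    · intro r hr
      rw [List.mem_toFinset] at hr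
      exact List.mem_toFinset.mpr (hSmem.subset hr)
    · exact le_trans S.toFinset_card_le hlen
    · intro b hb
      simp only [rbOf, List.mem_toFinset] at hb
      obtain ⟨r, hr⟩ : ∃ r ∈ S, memP (r, b) es = true := by
        have := hcov b hb
        rw [anyB_iff] at this
        exact this
      refine ⟨r, List.mem_toFinset.mpr hr.1, ?_⟩
      simp only [rbOf, List.mem_toFinset]
      exact memP_iff.mp hr.2
  · rintro ⟨S, hsub, hcard, hdom⟩
    obtain ⟨l', hsubl, hfin, hnd⟩ := exists_sublist_toFinset (es.map Prod.fst) S hsub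
    refine ⟨l', mem_sublB.mpr hsubl, ?_⟩
    rw [Bool.and_eq_true, decide_eq_true_eq, allB_iff]
    constructor
    · rw [← List.toFinset_card_of_nodup hnd, hfin]
      exact hcard
    · intro b hb
      rw [anyB_iff]
      obtain ⟨r, hrS, hedge⟩ := hdom b (by
        simp only [rbOf, List.mem_toFinset]
        exact List.mem_toFinset.mp (List.mem_toFinset.mpr hb))
      refine ⟨r, ?_, ?_⟩
      · rw [← List.mem_toFinset, hfin]; exact hrS
      · rw [memP_iff]
        simp only [rbOf, List.mem_toFinset] at hedge
        exact hedge

end S18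


namespace S18

def dedupB : List ℕ → List ℕ
  | [] => []
  | a :: l => cond (memB a (dedupB l)) (dedupB l) (a :: dedupB l)

theorem dedupB_spec : ∀ l : List ℕ, (dedupB l).toFinset = l.toFinset ∧ (dedupB l).Nodup := by
  intro l
  induction l with
  | nil => exact ⟨rfl, List.nodup_nil⟩
  | cons a l ih =>
    obtain ⟨h1, h2⟩ := ih
    unfold dedupB
    rcases h : memB a (dedupB l) with _ | _
    case false =>
      have h' : a ∉ dedupB l := fun hmem => by simp [memB_iff.mpr hmem] at h
      rw [cond_false]
      constructor
      · rw [List.toFinset_cons, List.toFinset_cons, h1]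
      · rw [List.nodup_cons]
        exact ⟨h', h2⟩
    case true =>
      rw [memB_iff] at h
      rw [cond_true]
      constructor
      · rw [h1, List.toFinset_cons]
        symm
        apply Finset.insert_eq_self.mpr
        rw [← h1]
        exact List.mem_toFinset.mpr h
      · exact h2

theorem dedupB_length (l : List ℕ) : (dedupB l).length = l.toFinset.card := by
  obtain ⟨h1, h2⟩ := dedupB_spec l
  rw [← h1, List.toFinset_card_of_nodup h2]

def ddB (T : List (ℕ × Letter × ℕ)) : ℕ := (dedupB (T.map (fun t => t.2.2))).length

theorem ddB_eq (T : List (ℕ × Letter × ℕ)) : ddB T = (Tgt T).card := dedupB_length _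

def factB (n : ℕ) : ℕ := (List.range n).foldl (fun acc i => acc * (i + 1)) 1

theorem foldl_fact : ∀ (n : ℕ) (a : ℕ),
    (List.range n).foldl (fun acc i => acc * (i + 1)) a = a * Nat.factorial n := by
  intro n
  induction n with
  | zero => intro a; simp [Nat.factorial]
  | succ n ih =>
    intro a
    rw [List.range_succ, List.foldl_append, ih]
    simp only [List.foldl_cons, List.foldl_nil]
    rw [Nat.factorial_succ]
    ring

theorem factB_eq (n : ℕ) : factB n = Nat.factorial n := by
  unfold factB
  rw [foldl_fact]
  ring

def nnB (T : List (ℕ × Letter × ℕ)) : ℕ := ddB T + 1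
def lamB (T : List (ℕ × Letter × ℕ)) : ℕ := factB (nnB T)
def b0B (T : List (ℕ × Letter × ℕ)) : ℕ := nnB T * (nnB T * lamB T) + lamB T
def b1B (T : List (ℕ × Letter × ℕ)) : ℕ := b0B T + lamB T
def mBoundB (T : List (ℕ × Letter × ℕ)) : ℕ := ddB T * (b0B T * b0B T + 2) + 1

theorem nnB_eq (T : List (ℕ × Letter × ℕ)) : nnB T = nn T := by
  unfold nnB nn; rw [ddB_eq]

theorem lamB_eq (T : List (ℕ × Letter × ℕ)) : lamB T = lam T := by
  unfold lamB lam; rw [factB_eq, nnB_eq]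

theorem b0B_eq (T : List (ℕ × Letter × ℕ)) : b0B T = b0 T := by
  unfold b0B b0; rw [lamB_eq, nnB_eq]

theorem b1B_eq (T : List (ℕ × Letter × ℕ)) : b1B T = b1 T := by
  unfold b1B b1; rw [lamB_eq, b0B_eq]

theorem mBoundB_eq (T : List (ℕ × Letter × ℕ)) : mBoundB T = mBound T := by
  unfold mBoundB mBound; rw [ddB_eq, b0B_eq]

def pairsB (c : ℕ) : List (ℕ × ℕ) :=
  (List.range c).flatMap (fun p => (List.range c).map (fun q => (p, q)))

theorem mem_pairsB {c : ℕ} {e : ℕ × ℕ} (h1 : e.1 < c) (h2 : e.2 < c) : e ∈ pairsB c := by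
  unfold pairsB
  rw [List.mem_flatMap]
  exact ⟨e.1, List.mem_range.mpr h1, List.mem_map.mpr ⟨e.2, List.mem_range.mpr h2, rfl⟩⟩

def listsB : ℕ → List (ℕ × ℕ) → List (List (ℕ × ℕ))
  | 0, _ => [[]]
  | n + 1, P => [] :: P.flatMap (fun e => (listsB n P).map (fun l => e :: l))

theorem mem_listsB {P : List (ℕ × ℕ)} :
    ∀ (n : ℕ) (l : List (ℕ × ℕ)), l.length ≤ n → (∀ e ∈ l, e ∈ P) → l ∈ listsB n P := by
  intro n
  induction n with
  | zero =>
    intro l hl _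
    have : l = [] := List.length_eq_zero_iff.mp (by omega)
    subst this
    simp [listsB]
  | succ n ih =>
    intro l hl hmem
    cases l with
    | nil => simp [listsB]
    | cons e l =>
      unfold listsB
      rw [List.mem_cons]
      right
      rw [List.mem_flatMap]
      refine ⟨e, hmem e List.mem_cons_self, ?_⟩
      rw [List.mem_map]
      refine ⟨l, ih l (by simp at hl; omega) ?_, rfl⟩
      intro e' he'
      exact hmem e' (List.mem_cons_of_mem e he')

def checkB (M : NFAEnc) : Bool :=
  anyB (List.range (b1B M.1)) (fun k =>
    anyB (listsB (mBoundB M.1) (pairsB (b0B M.1))) (fun es =>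
      acceptB M (encode k es) && rbdsB k es))

theorem checkB_iff (M : NFAEnc) :
    checkB M = true ↔ (∃ w : Word, w ∈ encLang M ∧ w ∈ Enc ∧
      ∃ (G : RBGraph) (k : ℕ), decodesToRB w G k ∧ HasRBDS G k) := by
  constructor
  · intro h
    unfold checkB at h
    rw [anyB_iff] at h
    obtain ⟨k, -, hk⟩ := h
    rw [anyB_iff] at hk
    obtain ⟨es, -, hes⟩ := hk
    rw [Bool.and_eq_true] at hes
    exact ⟨encode k es, acceptB_iff.mp hes.1, ⟨k, es, rfl⟩, rbOf es, k, ⟨es, rfl, rfl⟩,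
      rbdsB_iff.mp hes.2⟩
  · intro hP
    rw [main_iff] at hP
    obtain ⟨k, hk, es, hlen, hbd, hL, hRB⟩ := hP
    unfold checkB
    rw [anyB_iff]
    refine ⟨k, List.mem_range.mpr (by rw [b1B_eq]; exact hk), ?_⟩
    rw [anyB_iff]
    refine ⟨es, ?_, ?_⟩
    · apply mem_listsB
      · rw [mBoundB_eq]; exact hlen
      · intro e he
        obtain ⟨h1, h2⟩ := hbd e he
        exact mem_pairsB (by rw [b0B_eq]; exact h1) (by rw [b0B_eq]; exact h2)
    · rw [Bool.and_eq_true]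
      exact ⟨acceptB_iff.mpr hL, rbdsB_iff.mpr hRB⟩

end S18


namespace S18

open Primrec

theorem primrec_anyB {α β : Type} [Primcodable α] [Primcodable β] {l : α → List β}
    {p : α → β → Bool} (hl : Primrec l) (hp : Primrec₂ p) :
    Primrec fun a => anyB (l a) (p a) := by
  have h : Primrec₂ fun (a : α) (bs : β × Bool) => p a bs.1 || bs.2 :=
    (dom_bool₂ (· || ·)).comp₂ (hp.comp₂ Primrec₂.left (Primrec.fst.comp₂ Primrec₂.right))
      (Primrec.snd.comp₂ Primrec₂.right)
  exact Primrec.list_foldr hl (const false) h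

theorem primrec_allB {α β : Type} [Primcodable α] [Primcodable β] {l : α → List β}
    {p : α → β → Bool} (hl : Primrec l) (hp : Primrec₂ p) :
    Primrec fun a => allB (l a) (p a) := by
  have h : Primrec₂ fun (a : α) (bs : β × Bool) => p a bs.1 && bs.2 :=
    (dom_bool₂ (· && ·)).comp₂ (hp.comp₂ Primrec₂.left (Primrec.fst.comp₂ Primrec₂.right))
      (Primrec.snd.comp₂ Primrec₂.right)
  exact Primrec.list_foldr hl (const true) h

theorem primrec_memB : Primrec₂ memB := by
  apply Primrec₂.mk
  exact primrec_anyB Primrec.snd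
    (Primrec.eq.comp₂ Primrec₂.right (Primrec.fst.comp₂ Primrec₂.left)).decide

theorem primrec_memP : Primrec₂ memP := by
  apply Primrec₂.mk
  exact primrec_anyB Primrec.snd
    (Primrec.eq.comp₂ Primrec₂.right (Primrec.fst.comp₂ Primrec₂.left)).decide

/-- `stepB` as a primitive recursive function on a packed argument. -/
theorem primrec_stepB {α : Type} [Primcodable α] {T : α → List (ℕ × Letter × ℕ)}
    {S : α → List ℕ} {x : α → Letter} (hT : Primrec T) (hS : Primrec S) (hx : Primrec x) :
    Primrec fun a => stepB (T a) (S a) (x a) := by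
  apply Primrec.list_flatMap hT
  -- inner: fun a (t : ℕ × Letter × ℕ) => cond (memB t.1 (S a) && decide (t.2.1 = x a)) [t.2.2] []
  apply Primrec₂.mk
  have hpair : Primrec fun z : α × ℕ × Letter × ℕ => z.2 := Primrec.snd
  have ht1 : Primrec fun z : α × ℕ × Letter × ℕ => z.2.1 := Primrec.fst.comp Primrec.snd
  have ht21 : Primrec fun z : α × ℕ × Letter × ℕ => z.2.2.1 :=
    Primrec.fst.comp (Primrec.snd.comp Primrec.snd)
  have ht22 : Primrec fun z : α × ℕ × Letter × ℕ => z.2.2.2 :=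
    Primrec.snd.comp (Primrec.snd.comp Primrec.snd)
  have hSz : Primrec fun z : α × ℕ × Letter × ℕ => S z.1 := hS.comp Primrec.fst
  have hxz : Primrec fun z : α × ℕ × Letter × ℕ => x z.1 := hx.comp Primrec.fst
  have hcondb : Primrec fun z : α × ℕ × Letter × ℕ =>
      (memB z.2.1 (S z.1) && decide (z.2.2.1 = x z.1)) :=
    (dom_bool₂ (· && ·)).comp (primrec_memB.comp ht1 hSz) (Primrec.eq.comp ht21 hxz).decide
  exact Primrec.cond hcondb (Primrec.list_cons.comp ht22 (const [])) (const [])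

theorem primrec_foldW : Primrec₂ fun (M : NFAEnc) (w : Word) =>
    w.foldl (stepB M.1) [M.2.1] := by
  have hstep : Primrec₂ fun (p : NFAEnc × Word) (sb : List ℕ × Letter) =>
      stepB p.1.1 sb.1 sb.2 := by
    apply Primrec₂.mk
    exact primrec_stepB
      (Primrec.fst.comp (Primrec.fst.comp Primrec.fst))
      (Primrec.fst.comp Primrec.snd)
      (Primrec.snd.comp Primrec.snd)
  have h : Primrec fun p : NFAEnc × Word =>
      p.2.foldl (fun s b => stepB p.1.1 s b) [p.1.2.1] :=
    Primrec.list_foldl (Primrec.snd : Primrec fun p : NFAEnc × Word => p.2)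
      (Primrec.list_cons.comp (Primrec.fst.comp (Primrec.snd.comp Primrec.fst)) (const []))
      hstep
  exact Primrec₂.mk (h.of_eq fun p => rfl)

theorem primrec_acceptB : Primrec₂ acceptB := by
  apply Primrec₂.mk
  apply primrec_anyB (Primrec.snd.comp (Primrec.snd.comp Primrec.fst))
  exact primrec_memB.comp₂ Primrec₂.right (primrec_foldW.comp₂
    (Primrec.fst.comp₂ Primrec₂.left) (Primrec.snd.comp₂ Primrec₂.left))

theorem primrec_replicate (a : Letter) : Primrec fun n => List.replicate n a := by
  have h : Primrec fun n => (List.range n).map (fun _ => a) :=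
    Primrec.list_map Primrec.list_range ((const a).comp₂ Primrec₂.left)
  apply h.of_eq
  intro n
  rw [show (fun _ : ℕ => a) = Function.const ℕ a from rfl, List.map_const, List.length_range]

theorem primrec_thresholdTok : Primrec thresholdTok := by
  unfold thresholdTok
  exact Primrec.list_cons.comp (const Letter.tri)
    (Primrec.list_append.comp (primrec_replicate Letter.one) (const [Letter.dollar]))

theorem primrec_leftTok : Primrec leftTok := by
  unfold leftTok
  exact Primrec.list_cons.comp (const Letter.tri)
    (Primrec.list_append.comp (primrec_replicate Letter.lett) (const [Letter.hash]))

theorem primrec_rightTok : Primrec rightTok := by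
  unfold rightTok
  exact Primrec.list_cons.comp (const Letter.tri)
    (Primrec.list_append.comp (primrec_replicate Letter.lett) (const [Letter.dollar]))

theorem primrec_encode : Primrec₂ encode := by
  apply Primrec₂.mk
  unfold encode
  apply Primrec.list_append.comp (primrec_thresholdTok.comp Primrec.fst)
  apply Primrec.list_flatten.comp
  apply Primrec.list_map (Primrec.snd : Primrec fun p : ℕ × List (ℕ × ℕ) => p.2)
  apply Primrec₂.mk
  exact Primrec.list_append.comp
    (primrec_leftTok.comp (Primrec.fst.comp Primrec.snd))
    (primrec_rightTok.comp (Primrec.snd.comp Primrec.snd))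

end S18


namespace S18

open Primrec

theorem sublB_eq_rec : ∀ l : List ℕ,
    (List.rec [[]] (fun a _ IH => IH ++ IH.map (a :: ·)) l : List (List ℕ)) = sublB l := by
  intro l
  induction l with
  | nil => rfl
  | cons a l ih =>
    show (List.rec [[]] _ l : List (List ℕ)) ++ _ = _
    simp only [sublB]
    rw [← ih]

theorem primrec_sublB : Primrec sublB := by
  have hstep : Primrec₂ fun (_ : List ℕ) (t : ℕ × List ℕ × List (List ℕ)) =>
      t.2.2 ++ t.2.2.map (t.1 :: ·) := by
    apply Primrec₂.mk
    have hX : Primrec fun z : List ℕ × ℕ × List ℕ × List (List ℕ) => z.2.2.2 :=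
      Primrec.snd.comp (Primrec.snd.comp Primrec.snd)
    exact Primrec.list_append.comp hX
      (Primrec.list_map hX
        (Primrec.list_cons.comp₂
          ((Primrec.fst.comp Primrec.snd).comp₂ Primrec₂.left) Primrec₂.right))
  have h := Primrec.list_rec Primrec.id (const ([[]] : List (List ℕ))) hstep
  exact h.of_eq fun l => sublB_eq_rec l

theorem primrec_rbdsB : Primrec₂ rbdsB := by
  apply Primrec₂.mk
  unfold rbdsB
  apply primrec_anyB (primrec_sublB.comp
    (Primrec.list_map Primrec.snd (Primrec.fst.comp₂ Primrec₂.right)))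
  apply Primrec₂.mk
  have hk : Primrec fun z : (ℕ × List (ℕ × ℕ)) × List ℕ => z.1.1 :=
    Primrec.fst.comp Primrec.fst
  have hes : Primrec fun z : (ℕ × List (ℕ × ℕ)) × List ℕ => z.1.2 :=
    Primrec.snd.comp Primrec.fst
  have hS : Primrec fun z : (ℕ × List (ℕ × ℕ)) × List ℕ => z.2 := Primrec.snd
  apply (dom_bool₂ (· && ·)).comp
    (Primrec.nat_le.comp (Primrec.list_length.comp hS) hk).decide
  apply primrec_allB (Primrec.list_map hes (Primrec.snd.comp₂ Primrec₂.right))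
  apply Primrec₂.mk
  apply primrec_anyB (Primrec.snd.comp Primrec.fst)
  exact primrec_memP.comp₂
    (Primrec₂.pair.comp₂ Primrec₂.right (Primrec.snd.comp₂ Primrec₂.left))
    ((Primrec.snd.comp (Primrec.fst.comp Primrec.fst)).comp₂ Primrec₂.left)

theorem dedupB_eq_rec : ∀ l : List ℕ,
    (List.rec [] (fun a _ IH => cond (memB a IH) IH (a :: IH)) l : List ℕ) = dedupB l := by
  intro l
  induction l with
  | nil => rfl
  | cons a l ih =>
    show cond (memB a (List.rec [] _ l : List ℕ)) _ _ = _
    rw [ih]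
    rfl

theorem primrec_dedupB : Primrec dedupB := by
  have hstep : Primrec₂ fun (_ : List ℕ) (t : ℕ × List ℕ × List ℕ) =>
      cond (memB t.1 t.2.2) t.2.2 (t.1 :: t.2.2) := by
    apply Primrec₂.mk
    have hA : Primrec fun z : List ℕ × ℕ × List ℕ × List ℕ => z.2.1 :=
      Primrec.fst.comp Primrec.snd
    have hX : Primrec fun z : List ℕ × ℕ × List ℕ × List ℕ => z.2.2.2 :=
      Primrec.snd.comp (Primrec.snd.comp Primrec.snd)
    exact Primrec.cond (primrec_memB.comp hA hX) hX (Primrec.list_cons.comp hA hX)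
  have h := Primrec.list_rec Primrec.id (const ([] : List ℕ)) hstep
  exact h.of_eq fun l => dedupB_eq_rec l

theorem primrec_ddB : Primrec ddB := by
  unfold ddB
  exact Primrec.list_length.comp (primrec_dedupB.comp
    (Primrec.list_map Primrec.id
      ((Primrec.snd.comp Primrec.snd).comp₂ Primrec₂.right)))

theorem primrec_factB : Primrec factB := by
  have hstep : Primrec₂ fun (_ : ℕ) (p : ℕ × ℕ) => p.1 * (p.2 + 1) :=
    Primrec₂.mk (Primrec.nat_mul.comp (Primrec.fst.comp Primrec.snd)
      (Primrec.succ.comp (Primrec.snd.comp Primrec.snd)))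
  have h := Primrec.list_foldl Primrec.list_range (const (1 : ℕ)) hstep
  exact h.of_eq fun n => rfl

theorem primrec_nnB : Primrec nnB := Primrec.succ.comp primrec_ddB

theorem primrec_lamB : Primrec lamB := primrec_factB.comp primrec_nnB

theorem primrec_b0B : Primrec b0B :=
  Primrec.nat_add.comp
    (Primrec.nat_mul.comp primrec_nnB (Primrec.nat_mul.comp primrec_nnB primrec_lamB))
    primrec_lamB

theorem primrec_b1B : Primrec b1B := Primrec.nat_add.comp primrec_b0B primrec_lamB

theorem primrec_mBoundB : Primrec mBoundB :=
  Primrec.succ.comp (Primrec.nat_mul.comp primrec_ddB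
    (Primrec.nat_add.comp (Primrec.nat_mul.comp primrec_b0B primrec_b0B) (const 2)))

theorem primrec_pairsB : Primrec pairsB := by
  unfold pairsB
  apply Primrec.list_flatMap Primrec.list_range
  apply Primrec₂.mk
  apply Primrec.list_map (Primrec.list_range.comp Primrec.fst)
  exact Primrec₂.pair.comp₂ (Primrec.snd.comp₂ Primrec₂.left) Primrec₂.right

theorem listsB_eq_rec : ∀ (n : ℕ) (P : List (ℕ × ℕ)),
    (Nat.rec [[]] (fun _ IH => [] :: P.flatMap (fun e => IH.map (e :: ·))) n :
      List (List (ℕ × ℕ))) = listsB n P := by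
  intro n P
  induction n with
  | zero => rfl
  | succ n ih =>
    simp only [listsB]
    rw [← ih]

theorem primrec_listsB : Primrec fun M : NFAEnc => listsB (mBoundB M.1) (pairsB (b0B M.1)) := by
  have hstep : Primrec₂ fun (M : NFAEnc) (p : ℕ × List (List (ℕ × ℕ))) =>
      ([] : List (ℕ × ℕ)) :: (pairsB (b0B M.1)).flatMap (fun e => p.2.map (e :: ·)) := by
    apply Primrec₂.mk
    apply Primrec.list_cons.comp (const ([] : List (ℕ × ℕ)))
    apply Primrec.list_flatMap
      (primrec_pairsB.comp (primrec_b0B.comp (Primrec.fst.comp Primrec.fst)))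
    apply Primrec₂.mk
    apply Primrec.list_map (Primrec.snd.comp (Primrec.snd.comp Primrec.fst))
    exact Primrec.list_cons.comp₂ (Primrec.snd.comp₂ Primrec₂.left) Primrec₂.right
  have h := Primrec.nat_rec' (primrec_mBoundB.comp Primrec.fst)
    (const ([[]] : List (List (ℕ × ℕ)))) hstep
  exact h.of_eq fun M => listsB_eq_rec (mBoundB M.1) (pairsB (b0B M.1))

theorem primrec_checkB : Primrec checkB := by
  unfold checkB
  apply primrec_anyB (Primrec.list_range.comp (primrec_b1B.comp Primrec.fst))
  apply Primrec₂.mk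
  apply primrec_anyB (primrec_listsB.comp Primrec.fst)
  apply Primrec₂.mk
  exact (dom_bool₂ (· && ·)).comp
    (primrec_acceptB.comp (Primrec.fst.comp Primrec.fst)
      (primrec_encode.comp (Primrec.snd.comp Primrec.fst) Primrec.snd))
    (primrec_rbdsB.comp (Primrec.snd.comp Primrec.fst) Primrec.snd)

end S18


/-- `int_Reg(Red-Blue Dominating Set)` is decidable: the predicate on
(finite encodings of) NFAs `M` over `Σ`, asserting that some `w ∈ L(M) ∩ Enc` with
`decode_red-blue(w) = (G, k)` satisfies that `G` has a red-blue dominating set of size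
at most `k`, is computable. -/
theorem stmt18 :
    ComputablePred (fun M : NFAEnc =>
      ∃ w : Word, w ∈ encLang M ∧ w ∈ Enc ∧
        ∃ (G : RBGraph) (k : ℕ), decodesToRB w G k ∧ HasRBDS G k) := by
  rw [ComputablePred.computable_iff]
  refine ⟨S18.checkB, S18.primrec_checkB.to_comp, ?_⟩
  funext M
  exact propext (S18.checkB_iff M).symm
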